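/- Let d ≥ 1, L ∈ ℕ₀, K > 0, and let Φ, Φ₀ ∈ L₂(ℝ^d). Assume Φ satisfies condition (D) and the moment condition (M_{L−1}), and Φ₀ satisfies conditions (D) and (S_K). Then for every N ∈ ℕ there exists a constant C_N such that |(W_Φ Φ₀)(x,t)| ≤ C_N t^{min{L,K}+d/2} (1+|x|)^{−N} for all x ∈ ℝ^d and all 0 < t < 1. -/

import Mathlib

open MeasureTheory Real SchwartzMap Set
open scoped ENNReal NNReal FourierTransform

noncomputable section

/-- `d`-dimensional Euclidean space. -/
abbrev Ed (d : ℕ) : Type := EuclideanSpace ℝ (Fin d)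

/-- Complex-valued Schwartz functions on `ℝ^d`. -/
abbrev SchwartzC (d : ℕ) := SchwartzMap (Ed d) ℂ

/-- Tempered distributions on `ℝ^d`. -/
abbrev TemperedDist (d : ℕ) := SchwartzC d →L[ℂ] ℂ

variable {d : ℕ}

lemma affine_htg (a : Ed d) (L : Ed d →L[ℝ] Ed d) :
    Function.HasTemperateGrowth (fun y : Ed d => a + L y) := by
  apply Function.HasTemperateGrowth.of_fderiv (k := 1) (C := ‖a‖ + ‖L‖)
  · have h : (fderiv ℝ fun y : Ed d => a + L y) = fun _ => (L : Ed d →L[ℝ] Ed d) := by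
      funext y
      rw [fderiv_const_add]
      exact L.fderiv
    rw [h]
    exact .const _
  · exact (differentiable_const a).add L.differentiable
  · intro y
    have h1 : ‖a + L y‖ ≤ ‖a‖ + ‖L‖ * ‖y‖ :=
      (norm_add_le _ _).trans (by gcongr; exact L.le_opNorm y)
    have h2 : (0:ℝ) ≤ ‖a‖ := norm_nonneg a
    have h3 : (0:ℝ) ≤ ‖L‖ := norm_nonneg L
    have h4 : (0:ℝ) ≤ ‖y‖ := norm_nonneg y
    nlinarith

lemma htg_shiftdil (x : Ed d) (c : ℝ) :
    Function.HasTemperateGrowth (fun y : Ed d => c • (x - y)) := by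
  have h : (fun y : Ed d => c • (x - y))
      = fun y => c • x + ((-c) • ContinuousLinearMap.id ℝ (Ed d)) y := by
    funext y
    simp [smul_sub, sub_eq_add_neg, neg_smul]
  rw [h]
  exact affine_htg _ _

/-- The Schwartz function `y ↦ Φ (t⁻¹ • (x - y))`. -/
def shiftDil (Φ : SchwartzC d) (x : Ed d) {t : ℝ} (ht : 0 < t) : SchwartzC d :=
  SchwartzMap.compCLM ℂ (htg_shiftdil x t⁻¹)
    ⟨1, ‖x‖ + t, by
      intro y
      have h1 : ‖t⁻¹ • (x - y)‖ = t⁻¹ * ‖x - y‖ := by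
        rw [norm_smul, Real.norm_eq_abs, abs_of_pos (by positivity)]
      have h2 : ‖y‖ ≤ ‖x‖ + ‖x - y‖ := by
        have hy : y = x - (x - y) := by abel
        calc ‖y‖ = ‖x - (x - y)‖ := by rw [← hy]
        _ ≤ ‖x‖ + ‖x - y‖ := norm_sub_le _ _
      have h3 : ‖x - y‖ = t * ‖t⁻¹ • (x - y)‖ := by
        rw [h1]; field_simp
      have h4 : (0:ℝ) ≤ ‖t⁻¹ • (x - y)‖ := norm_nonneg _
      have h5 : (0:ℝ) ≤ ‖x‖ := norm_nonneg x
      calc ‖y‖ ≤ ‖x‖ + t * ‖t⁻¹ • (x - y)‖ := by rw [← h3]; exact h2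
      _ ≤ (‖x‖ + t) * (1 + ‖t⁻¹ • (x - y)‖) ^ 1 := by nlinarith⟩ Φ

/-- `(Φ_t ∗ f)(x) = f (Φ_t (x - ·))` where `Φ_t = t^{-d} Φ(·/t)`; set to `0` for `t ≤ 0`. -/
def convAt (f : TemperedDist d) (Φ : SchwartzC d) (t : ℝ) (x : Ed d) : ℂ :=
  if ht : 0 < t then ((t : ℂ) ^ d)⁻¹ * f (shiftDil Φ x ht) else 0

/-- Extended nonnegative norm of a complex number. -/
def enn (z : ℂ) : ℝ≥0∞ := (‖z‖₊ : ℝ≥0∞)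

/-- The Peetre maximal function `(Φ_t^∗ f)_a (x)`. -/
def peetreAt (f : TemperedDist d) (Φ : SchwartzC d) (a t : ℝ) (x : Ed d) : ℝ≥0∞ :=
  ⨆ y : Ed d, enn (convAt f Φ t (x + y)) / ENNReal.ofReal ((1 + ‖y‖ / t) ^ a)

/-- `L_p`-quasinorm (with values in `[0,∞]`) of an extended-valued function, `0 < p ≤ ∞`. -/
def lpE (p : ℝ≥0∞) (F : Ed d → ℝ≥0∞) : ℝ≥0∞ :=
  if p = ∞ then essSup F volume
  else (∫⁻ x, F x ^ p.toReal) ^ (1 / p.toReal)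

/-- `(∫_S G(t)^q w(t) dt)^{1/q}` with the usual modification (`sup` over `S`) for `q = ∞`. -/
def intAgg (q : ℝ≥0∞) (S : Set ℝ) (w : ℝ → ℝ) (G : ℝ → ℝ≥0∞) : ℝ≥0∞ :=
  if q = ∞ then ⨆ t ∈ S, G t
  else (∫⁻ t in S, G t ^ q.toReal * ENNReal.ofReal (w t)) ^ (1 / q.toReal)

/-- `(Σ_{k∈ℕ} G(k)^q)^{1/q}` with the usual modification for `q = ∞`. -/
def sumAggN (q : ℝ≥0∞) (G : ℕ → ℝ≥0∞) : ℝ≥0∞ :=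
  if q = ∞ then ⨆ k, G k else (∑' k, G k ^ q.toReal) ^ (1 / q.toReal)

/-- `(Σ_{k∈ℤ} G(k)^q)^{1/q}` with the usual modification for `q = ∞`. -/
def sumAggZ (q : ℝ≥0∞) (G : ℤ → ℝ≥0∞) : ℝ≥0∞ :=
  if q = ∞ then ⨆ k, G k else (∑' k, G k ^ q.toReal) ^ (1 / q.toReal)

/-- Tent (Lusin) aggregation `(∫_S ∫_{|z|<t} H(t,z)^q dz dt/t^{d+1})^{1/q}`,
with the usual modification for `q = ∞`. -/
def tentAgg (q : ℝ≥0∞) (S : Set ℝ) (H : ℝ → Ed d → ℝ≥0∞) : ℝ≥0∞ :=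
  if q = ∞ then ⨆ t ∈ S, ⨆ z ∈ Metric.ball (0 : Ed d) t, H t z
  else (∫⁻ t in S, (∫⁻ z in Metric.ball (0 : Ed d) t, H t z ^ q.toReal) *
      ENNReal.ofReal (t ^ (-(d : ℝ) - 1))) ^ (1 / q.toReal)

/-- Inhomogeneous kernel family: `Φ₀` for `j = 0` and `Φ` for `j ≥ 1`. -/
def kin (Φ₀ Φ : SchwartzC d) (j : ℕ) : SchwartzC d := if j = 0 then Φ₀ else Φ

/-- Dyadic scale `2^{-j}`, `j ∈ ℕ`. -/
def scN (j : ℕ) : ℝ := (2 : ℝ) ^ (-(j : ℤ))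

/-- Dyadic scale `2^{-k}`, `k ∈ ℤ`. -/
def scZ (k : ℤ) : ℝ := (2 : ℝ) ^ (-k)

/-- Tauberian condition for the pair `(Φ₀, Φ)` with parameter `ε`. -/
def TauberianPair (Φ₀ Φ : SchwartzC d) (ε : ℝ) : Prop :=
  (∀ ξ : Ed d, ‖ξ‖ < 2 * ε → 𝓕 ⇑Φ₀ ξ ≠ 0) ∧
  (∀ ξ : Ed d, ε / 2 < ‖ξ‖ → ‖ξ‖ < 2 * ε → 𝓕 ⇑Φ ξ ≠ 0)

/-- Homogeneous Tauberian condition for `Φ` with parameter `ε`. -/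
def TauberianHom (Φ : SchwartzC d) (ε : ℝ) : Prop :=
  ∀ ξ : Ed d, ε / 2 < ‖ξ‖ → ‖ξ‖ < 2 * ε → 𝓕 ⇑Φ ξ ≠ 0

/-- Moment condition of order `R`: all derivatives of `ℱΦ` of order `≤ R` vanish at `0`. -/
def MomentCond (Φ : SchwartzC d) (R : ℕ) : Prop :=
  ∀ n : ℕ, n ≤ R → iteratedFDeriv ℝ n (𝓕 ⇑Φ) 0 = 0

/-- `φ ∈ S₀`: all derivatives of the Fourier transform vanish at the origin. -/
def IsS0 (φ : SchwartzC d) : Prop :=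
  ∀ n : ℕ, iteratedFDeriv ℝ n (𝓕 ⇑φ) 0 = 0

/-- Inverse Fourier transform of a Schwartz function, as a Schwartz function. -/
def invF (φ : SchwartzC d) : SchwartzC d := (FourierTransform.fourierCLE ℂ (SchwartzC d)).symm φ

/-- Inhomogeneous dyadic resolution of unity `{φ_j}_{j∈ℕ}`, `φ_j = φ(2^{-j}·)` for `j ≥ 1`. -/
structure IsInhomPartition (φ₀ φ : SchwartzC d) : Prop where
  supp₀ : ∀ ξ : Ed d, 2 < ‖ξ‖ → φ₀ ξ = 0
  supp : ∀ ξ : Ed d, ‖ξ‖ < 1 / 2 ∨ 2 < ‖ξ‖ → φ ξ = 0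
  sum_one : ∀ ξ : Ed d, HasSum (fun j : ℕ => (kin φ₀ φ j) (scN j • ξ)) 1

/-- Homogeneous dyadic resolution of unity `{φ_j}_{j∈ℤ}`, `φ_j = φ(2^{-j}·)`. -/
structure IsHomPartition (φ : SchwartzC d) : Prop where
  supp : ∀ ξ : Ed d, ‖ξ‖ < 1 / 2 ∨ 2 < ‖ξ‖ → φ ξ = 0
  sum_one : ∀ ξ : Ed d, ξ ≠ 0 → HasSum (fun j : ℤ => φ (scZ j • ξ)) 1

/-- `min{p,q}` where `q` may be `∞`. -/
def minpq (p : ℝ) (q : ℝ≥0∞) : ℝ := if q = ∞ then p else min p q.toReal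

/-- `1/p` with the convention `1/∞ = 0`. -/
def invE (p : ℝ≥0∞) : ℝ := if p = ∞ then 0 else 1 / p.toReal

end
section Part2
noncomputable section

open MeasureTheory Real SchwartzMap Set
open scoped ENNReal NNReal FourierTransform

variable {d : ℕ}

/-- dyadic factor `2^{e·s}` as an extended nonnegative real. -/
def dy (e s : ℝ) : ℝ≥0∞ := ENNReal.ofReal ((2 : ℝ) ^ (e * s))

/-- The five quantities `‖f‖₁,…,‖f‖₅` of Theorem 2.2 (inhomogeneous `F`-scale). -/
def QF (Φ₀ Φ : SchwartzC d) (s p : ℝ) (q : ℝ≥0∞) (a : ℝ) :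
    Fin 5 → TemperedDist d → ℝ≥0∞ :=
  ![fun f => lpE (ENNReal.ofReal p) (fun x => enn (convAt f Φ₀ 1 x))
      + lpE (ENNReal.ofReal p) (fun x =>
          intAgg q (Ioc 0 1) (fun t => t⁻¹)
            (fun t => ENNReal.ofReal (t ^ (-s)) * enn (convAt f Φ t x))),
    fun f => lpE (ENNReal.ofReal p) (fun x => peetreAt f Φ₀ a 1 x)
      + lpE (ENNReal.ofReal p) (fun x =>
          intAgg q (Ioc 0 1) (fun t => t⁻¹)
            (fun t => ENNReal.ofReal (t ^ (-s)) * peetreAt f Φ a t x)),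
    fun f => lpE (ENNReal.ofReal p) (fun x => enn (convAt f Φ₀ 1 x))
      + lpE (ENNReal.ofReal p) (fun x =>
          tentAgg q (Ioc 0 1)
            (fun t z => ENNReal.ofReal (t ^ (-s)) * enn (convAt f Φ t (x + z)))),
    fun f => lpE (ENNReal.ofReal p) (fun x =>
        sumAggN q (fun k => dy k s * peetreAt f (kin Φ₀ Φ k) a (scN k) x)),
    fun f => lpE (ENNReal.ofReal p) (fun x =>
        sumAggN q (fun k => dy k s * enn (convAt f (kin Φ₀ Φ k) (scN k) x)))]

/-- The quasi-norm of `F^s_{p,q}(ℝ^d)` built from a dyadic resolution of unity `(φ₀, φ)`. -/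
def FnormI (φ₀ φ : SchwartzC d) (s p : ℝ) (q : ℝ≥0∞) (f : TemperedDist d) : ℝ≥0∞ :=
  lpE (ENNReal.ofReal p) (fun x =>
    sumAggN q (fun j => dy j s * enn (convAt f (kin (invF φ₀) (invF φ) j) (scN j) x)))

/-- The four quantities of the inhomogeneous Besov characterization. -/
def QB (Φ₀ Φ : SchwartzC d) (s : ℝ) (p q : ℝ≥0∞) (a : ℝ) :
    Fin 4 → TemperedDist d → ℝ≥0∞ :=
  ![fun f => lpE p (fun x => enn (convAt f Φ₀ 1 x))
      + intAgg q (Ioc 0 1) (fun t => t⁻¹)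
          (fun t => ENNReal.ofReal (t ^ (-s)) * lpE p (fun x => enn (convAt f Φ t x))),
    fun f => lpE p (fun x => peetreAt f Φ₀ a 1 x)
      + intAgg q (Ioc 0 1) (fun t => t⁻¹)
          (fun t => ENNReal.ofReal (t ^ (-s)) * lpE p (fun x => peetreAt f Φ a t x)),
    fun f => sumAggN q (fun k =>
        dy k s * lpE p (fun x => peetreAt f (kin Φ₀ Φ k) a (scN k) x)),
    fun f => sumAggN q (fun k =>
        dy k s * lpE p (fun x => enn (convAt f (kin Φ₀ Φ k) (scN k) x)))]

/-- The quasi-norm of `B^s_{p,q}(ℝ^d)` built from a dyadic resolution of unity `(φ₀, φ)`. -/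
def BnormI (φ₀ φ : SchwartzC d) (s : ℝ) (p q : ℝ≥0∞) (f : TemperedDist d) : ℝ≥0∞ :=
  sumAggN q (fun j =>
    dy j s * lpE p (fun x => enn (convAt f (kin (invF φ₀) (invF φ) j) (scN j) x)))

/-- The five quantities of the homogeneous `F`-scale characterization. -/
def QFdot (Φ : SchwartzC d) (s p : ℝ) (q : ℝ≥0∞) (a : ℝ) :
    Fin 5 → TemperedDist d → ℝ≥0∞ :=
  ![fun f => lpE (ENNReal.ofReal p) (fun x =>
        intAgg q (Ioi 0) (fun t => t⁻¹)
          (fun t => ENNReal.ofReal (t ^ (-s)) * enn (convAt f Φ t x))),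
    fun f => lpE (ENNReal.ofReal p) (fun x =>
        intAgg q (Ioi 0) (fun t => t⁻¹)
          (fun t => ENNReal.ofReal (t ^ (-s)) * peetreAt f Φ a t x)),
    fun f => lpE (ENNReal.ofReal p) (fun x =>
        tentAgg q (Ioi 0)
          (fun t z => ENNReal.ofReal (t ^ (-s)) * enn (convAt f Φ t (x + z)))),
    fun f => lpE (ENNReal.ofReal p) (fun x =>
        sumAggZ q (fun k => dy k s * peetreAt f Φ a (scZ k) x)),
    fun f => lpE (ENNReal.ofReal p) (fun x =>
        sumAggZ q (fun k => dy k s * enn (convAt f Φ (scZ k) x)))]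

/-- The quasi-norm of `Ḟ^s_{p,q}(ℝ^d)` built from a homogeneous resolution of unity `φ`. -/
def FnormH (φ : SchwartzC d) (s p : ℝ) (q : ℝ≥0∞) (f : TemperedDist d) : ℝ≥0∞ :=
  lpE (ENNReal.ofReal p) (fun x =>
    sumAggZ q (fun j => dy j s * enn (convAt f (invF φ) (scZ j) x)))

/-- The four quantities of the homogeneous Besov characterization. -/
def QBdot (Φ : SchwartzC d) (s : ℝ) (p q : ℝ≥0∞) (a : ℝ) :
    Fin 4 → TemperedDist d → ℝ≥0∞ :=
  ![fun f => intAgg q (Ioi 0) (fun t => t⁻¹)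
        (fun t => ENNReal.ofReal (t ^ (-s)) * lpE p (fun x => enn (convAt f Φ t x))),
    fun f => intAgg q (Ioi 0) (fun t => t⁻¹)
        (fun t => ENNReal.ofReal (t ^ (-s)) * lpE p (fun x => peetreAt f Φ a t x)),
    fun f => sumAggZ q (fun k => dy k s * lpE p (fun x => peetreAt f Φ a (scZ k) x)),
    fun f => sumAggZ q (fun k => dy k s * lpE p (fun x => enn (convAt f Φ (scZ k) x)))]

/-- The quasi-norm of `Ḃ^s_{p,q}(ℝ^d)` built from a homogeneous resolution of unity `φ`. -/
def BnormH (φ : SchwartzC d) (s : ℝ) (p q : ℝ≥0∞) (f : TemperedDist d) : ℝ≥0∞ :=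
  sumAggZ q (fun j => dy j s * lpE p (fun x => enn (convAt f (invF φ) (scZ j) x)))

/-- Distributional continuous wavelet transform `W_g f(x,t) = t^{d/2} (g_t ∗ f)(x)`. -/
def WT (g : SchwartzC d) (f : TemperedDist d) (x : Ed d) (t : ℝ) : ℂ :=
  ((t ^ ((d : ℝ) / 2) : ℝ) : ℂ) * convAt f g t x

end
end Part2
section Part3
noncomputable section

open MeasureTheory Real SchwartzMap Set
open scoped ENNReal NNReal FourierTransform

variable {d : ℕ}

/-! ### Function spaces on the `ax+b`-group `G = ℝ^d × (0,∞)` -/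

/-- Left translation on the `ax+b`-group: `L_{(z,r)}F(x,t) = F((x-z)/r, t/r)`. -/
def leftTr (z : Ed d) (r : ℝ) (F : Ed d × ℝ → ℂ) : Ed d × ℝ → ℂ :=
  fun w => F (r⁻¹ • (w.1 - z), w.2 / r)

/-- Right translation on the `ax+b`-group: `R_{(z,r)}F(x,t) = F(x + t•z, r·t)`. -/
def rightTr (z : Ed d) (r : ℝ) (F : Ed d × ℝ → ℂ) : Ed d × ℝ → ℂ :=
  fun w => F (w.1 + w.2 • z, r * w.2)

/-- Peetre maximal function on the group, for extended-valued `F`. -/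
def peetreSupE (a : ℝ) (F : Ed d × ℝ → ℝ≥0∞) (x : Ed d) (t : ℝ) : ℝ≥0∞ :=
  ⨆ y : Ed d, F (x + y, t) / ENNReal.ofReal ((1 + ‖y‖ / t) ^ a)

/-- Quasi-norm of the Peetre-type space `Ṗ^{s,a}_{p,q}(G)` (extended-valued version). -/
def PGnormE (s a : ℝ) (p q : ℝ≥0∞) (F : Ed d × ℝ → ℝ≥0∞) : ℝ≥0∞ :=
  lpE p (fun x =>
    intAgg q (Ioi 0) (fun t => t ^ (-(d : ℝ) - 1))
      (fun t => ENNReal.ofReal (t ^ (-s)) * peetreSupE a F x t))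

/-- Quasi-norm of `Ṗ^{s,a}_{p,q}(G)` of a complex-valued function on the group. -/
def PGnorm (s a : ℝ) (p q : ℝ≥0∞) (F : Ed d × ℝ → ℂ) : ℝ≥0∞ :=
  PGnormE s a p q (fun w => enn (F w))

/-- Quasi-norm of the space `L̇^s_{p,q}(G)` (extended-valued version). -/
def LGnormE (s : ℝ) (p q : ℝ≥0∞) (F : Ed d × ℝ → ℝ≥0∞) : ℝ≥0∞ :=
  intAgg q (Ioi 0) (fun t => t ^ (-(d : ℝ) - 1))
    (fun t => ENNReal.ofReal (t ^ (-s)) * lpE p (fun x => F (x, t)))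

/-- Quasi-norm of `L̇^s_{p,q}(G)` of a complex-valued function on the group. -/
def LGnorm (s : ℝ) (p q : ℝ≥0∞) (F : Ed d × ℝ → ℂ) : ℝ≥0∞ :=
  LGnormE s p q (fun w => enn (F w))

/-- Quasi-norm of the tent space `Ṫ^s_{p,q}(G)` of a complex-valued function on the group. -/
def TGnorm (s : ℝ) (p : ℝ≥0∞) (q : ℝ≥0∞) (F : Ed d × ℝ → ℂ) : ℝ≥0∞ :=
  lpE p (fun x =>
    tentAgg q (Ioi 0) (fun t z => ENNReal.ofReal (t ^ (-s)) * enn (F (x + z, t))))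

/-- The cube `Q_{j,k} = Π_i [α k_i β^{-j}, α(k_i+1)β^{-j}]`. -/
def Qcube (α β : ℝ) (j : ℤ) (k : Fin d → ℤ) : Set (Ed d) :=
  {x | ∀ i, α * k i * β ^ (-j) ≤ x i ∧ x i ≤ α * (k i + 1) * β ^ (-j)}

/-- The step function `F(x,t) = Σ_{j,k} |λ_{j,k}| χ_{Q_{j,k}}(x) χ_{[β^{-(j+1)},β^{-j}]}(t)`
associated with a sequence `λ` (extended-valued). -/
def stepFn (α β : ℝ) (lam : ℤ → (Fin d → ℤ) → ℂ) : Ed d × ℝ → ℝ≥0∞ :=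
  fun w => ∑' (j : ℤ) (k : Fin d → ℤ),
    (Qcube α β j k).indicator (fun _ => (‖lam j k‖₊ : ℝ≥0∞)) w.1 *
      (Icc (β ^ (-(j + 1)) : ℝ) (β ^ (-j))).indicator (fun _ => 1) w.2

/-! ### The continuous wavelet transform of square-integrable functions -/

variable {V : Type*} [NormedAddCommGroup V] [InnerProductSpace ℝ V]
  [MeasurableSpace V] [BorelSpace V] [FiniteDimensional ℝ V]

/-- Condition `(D)`: rapid polynomial decay. -/
def CondD (Ψ : V → ℂ) : Prop :=
  ∀ N : ℕ, ∃ C : ℝ, ∀ x, ‖Ψ x‖ ≤ C / (1 + ‖x‖) ^ N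

/-- Condition `(M_{L-1})`: vanishing moments of all orders `< L` (vacuous for `L = 0`). -/
def CondM (Ψ : V → ℂ) (L : ℕ) : Prop :=
  ∀ n : ℕ, n < L → iteratedFDeriv ℝ n (𝓕 Ψ) 0 = 0

end
end Part3
section Part4
noncomputable section

open MeasureTheory Real SchwartzMap Set
open scoped ENNReal NNReal FourierTransform

variable {V : Type*} [NormedAddCommGroup V] [InnerProductSpace ℝ V]
  [MeasureSpace V] [BorelSpace V] [FiniteDimensional ℝ V]

/-- Condition `(S_K)`: `(1+|ξ|)^K |D^ᾱ ℱΨ(ξ)|` is integrable for every multi-index. -/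
def CondS (Ψ : V → ℂ) (K : ℝ) : Prop :=
  ∀ n : ℕ, Integrable (fun ξ : V =>
    (1 + ‖ξ‖) ^ K * ‖iteratedFDeriv ℝ n (𝓕 Ψ) ξ‖) volume

/-- The continuous wavelet transform `W_g f(x,t) = ⟨T_x D_t^{L₂} g, f⟩` of functions. -/
def CWT (g f : V → ℂ) (x : V) (t : ℝ) : ℂ :=
  ∫ y : V, (starRingEnd ℂ)
      (((t ^ (-(Module.finrank ℝ V : ℝ) / 2) : ℝ) : ℂ) * g (t⁻¹ • (y - x))) * f y

end
end Part4
open MeasureTheory Real SchwartzMap Set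
open scoped ENNReal NNReal FourierTransform


section Aux12
noncomputable section
open MeasureTheory Real Set Complex
open scoped ENNReal NNReal FourierTransform RealInnerProductSpace

namespace Aux12

variable {d : ℕ}

lemma aux_int {Φ : Ed d → ℂ} (hm : AEStronglyMeasurable Φ volume) (hD : CondD Φ)
    (n : ℕ) : Integrable (fun v : Ed d => ‖v‖ ^ n * ‖Φ v‖) := by
  obtain ⟨C, hC⟩ := hD (n + d + 1)
  have hC0 : 0 ≤ C := by
    have h := hC 0
    simp only [norm_zero, add_zero, one_pow, div_one] at h
    exact (norm_nonneg _).trans h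
  have hint : Integrable (fun v : Ed d => C * (1 + ‖v‖) ^ (-((d : ℝ) + 1))) volume := by
    refine (integrable_one_add_norm ?_).const_mul C
    rw [finrank_euclideanSpace_fin]
    linarith
  refine hint.mono' ?_ ?_
  · exact ((continuous_norm.pow n).aestronglyMeasurable).mul hm.norm
  · filter_upwards with v
    have h1 : (0:ℝ) < 1 + ‖v‖ := by positivity
    have h2 : ‖v‖ ^ n ≤ (1 + ‖v‖) ^ n := by
      gcongr; linarith
    have h3 : ‖Φ v‖ ≤ C / (1 + ‖v‖) ^ (n + d + 1) := hC v
    have h4 : ‖‖v‖ ^ n * ‖Φ v‖‖ = ‖v‖ ^ n * ‖Φ v‖ :=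
      Real.norm_of_nonneg (by positivity)
    rw [h4]
    calc ‖v‖ ^ n * ‖Φ v‖ ≤ (1 + ‖v‖) ^ n * (C / (1 + ‖v‖) ^ (n + d + 1)) := by
          exact mul_le_mul h2 h3 (norm_nonneg _) (by positivity)
      _ = C * (1 + ‖v‖) ^ (-((d : ℝ) + 1)) := by
          rw [Real.rpow_neg h1.le]
          have : ((d : ℝ) + 1) = ((d + 1 : ℕ) : ℝ) := by push_cast; ring
          rw [this, Real.rpow_natCast]
          have h5 : (1 + ‖v‖) ^ (n + d + 1) = (1 + ‖v‖) ^ n * (1 + ‖v‖) ^ (d + 1) := by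
            rw [← pow_add]; ring_nf
          rw [h5]
          field_simp

lemma aux_smooth {Φ : Ed d → ℂ} (hint : ∀ n : ℕ, Integrable (fun v : Ed d => ‖v‖ ^ n * ‖Φ v‖))
    (n : ℕ∞) : ContDiff ℝ n (𝓕 Φ) :=
  Real.contDiff_fourier (fun k _ => hint k)

lemma aux_deriv_bound {Φ : Ed d → ℂ} (hm : AEStronglyMeasurable Φ volume)
    (hint : ∀ n : ℕ, Integrable (fun v : Ed d => ‖v‖ ^ n * ‖Φ v‖)) (n : ℕ) (η : Ed d) :
    ‖iteratedFDeriv ℝ n (𝓕 Φ) η‖ ≤ (2 * π) ^ n * ∫ v : Ed d, ‖v‖ ^ n * ‖Φ v‖ := by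
  rw [Real.iteratedFDeriv_fourier (N := n) (fun k _ => hint k) hm le_rfl]
  refine (VectorFourier.norm_fourierIntegral_le_integral_norm _ _ _ _ _).trans ?_
  rw [← MeasureTheory.integral_const_mul]
  apply integral_mono_of_nonneg (ae_of_all _ fun v => norm_nonneg _)
    ((hint n).const_mul _)
  filter_upwards with v
  refine (VectorFourier.norm_fourierPowSMulRight_le _ _ _ _).trans ?_
  have h1 : ‖innerSL (E := Ed d) ℝ‖ ≤ 1 := norm_innerSL_le ℝ
  have h2 : (2 * π * ‖innerSL (E := Ed d) ℝ‖) ^ n ≤ (2 * π) ^ n := by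
    apply pow_le_pow_left₀ (by positivity)
    nlinarith [Real.pi_pos]
  calc (2 * π * ‖innerSL (E := Ed d) ℝ‖) ^ n * ‖v‖ ^ n * ‖Φ v‖
      ≤ (2 * π) ^ n * ‖v‖ ^ n * ‖Φ v‖ := by
        apply mul_le_mul_of_nonneg_right (mul_le_mul_of_nonneg_right h2 (by positivity))
          (norm_nonneg _)
    _ = (2 * π) ^ n * (‖v‖ ^ n * ‖Φ v‖) := by ring


lemma aux_taylor {f : Ed d → ℂ} {B : ℝ}
    (hf : ∀ n : ℕ, ContDiff ℝ n f) {J : ℕ}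
    (hvan : ∀ i, i < J → iteratedFDeriv ℝ i f 0 = 0)
    (hB : ∀ η, ‖iteratedFDeriv ℝ J f η‖ ≤ B) :
    ∀ k i, i + k = J → ∀ η : Ed d, ‖iteratedFDeriv ℝ i f η‖ ≤ B * ‖η‖ ^ k := by
  have hB0 : 0 ≤ B := (norm_nonneg _).trans (hB 0)
  intro k
  induction k with
  | zero =>
    intro i hi η
    have : i = J := by omega
    subst this
    simpa using hB η
  | succ k ih =>
    intro i hi η
    have hIH : ∀ y : Ed d, ‖iteratedFDeriv ℝ (i + 1) f y‖ ≤ B * ‖y‖ ^ k :=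
      ih (i + 1) (by omega)
    have hfd : ∀ y : Ed d,
        ‖fderiv ℝ (iteratedFDeriv ℝ i f) y‖ = ‖iteratedFDeriv ℝ (i + 1) f y‖ := by
      intro y
      have h := congrFun (iteratedFDeriv_succ_eq_comp_left (𝕜 := ℝ) (f := f) (n := i)) y
      rw [h, Function.comp_apply, LinearIsometryEquiv.norm_map]
    have hdiff : ∀ y : Ed d, DifferentiableAt ℝ (iteratedFDeriv ℝ i f) y := by
      intro y
      exact (((hf (i + 1)).differentiable_iteratedFDeriv
        (by exact_mod_cast lt_add_one i)) y : _)
    have hmain : ‖iteratedFDeriv ℝ i f η - iteratedFDeriv ℝ i f 0‖ ≤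
        (B * ‖η‖ ^ k) * ‖η - 0‖ := by
      refine Convex.norm_image_sub_le_of_norm_fderiv_le (fun y _ => hdiff y)
        (fun y hy => ?_) (convex_closedBall (0 : Ed d) ‖η‖)
        (Metric.mem_closedBall_self (norm_nonneg η)) ?_
      · rw [hfd y]
        refine (hIH y).trans ?_
        have hy' : ‖y‖ ≤ ‖η‖ := by
          simpa [dist_zero_right] using Metric.mem_closedBall.mp hy
        exact mul_le_mul_of_nonneg_left (pow_le_pow_left₀ (norm_nonneg _) hy' k) hB0
      · simp [Metric.mem_closedBall, dist_zero_right]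
    rw [hvan i (by omega), sub_zero, sub_zero] at hmain
    calc ‖iteratedFDeriv ℝ i f η‖ ≤ B * ‖η‖ ^ k * ‖η‖ := hmain
      _ = B * ‖η‖ ^ (k + 1) := by rw [pow_succ]; ring

lemma aux_dilate {G : Ed d → ℂ} (hG : ∀ n : ℕ, ContDiff ℝ n G) (t : ℝ) (n : ℕ) (ξ : Ed d) :
    ‖iteratedFDeriv ℝ n (fun ξ : Ed d => (starRingEnd ℂ) (G (t • ξ))) ξ‖ ≤
      |t| ^ n * ‖iteratedFDeriv ℝ n G (t • ξ)‖ := by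
  set S : Ed d →L[ℝ] Ed d := t • ContinuousLinearMap.id ℝ (Ed d) with hS
  have e1 : (fun ξ : Ed d => (starRingEnd ℂ) (G (t • ξ))) = ⇑Complex.conjLIE ∘ (G ∘ ⇑S) := by
    funext y
    simp [hS, Complex.conjLIE]; rfl
  rw [e1, LinearIsometryEquiv.norm_iteratedFDeriv_comp_left,
    ContinuousLinearMap.iteratedFDeriv_comp_right S (hG n) ξ le_rfl]
  have hSx : S ξ = t • ξ := by simp [hS]
  refine (ContinuousMultilinearMap.norm_compContinuousLinearMap_le _ _).trans ?_
  have hSn : ‖S‖ ≤ |t| := by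
    refine (norm_smul_le t (ContinuousLinearMap.id ℝ (Ed d))).trans ?_
    calc ‖t‖ * ‖ContinuousLinearMap.id ℝ (Ed d)‖ ≤ ‖t‖ * 1 :=
          mul_le_mul_of_nonneg_left ContinuousLinearMap.norm_id_le (norm_nonneg t)
      _ = |t| := by rw [mul_one, Real.norm_eq_abs]
  rw [hSx]
  have : (∏ _i : Fin n, ‖S‖) ≤ |t| ^ n := by
    rw [Finset.prod_const, Finset.card_univ, Fintype.card_fin]
    exact pow_le_pow_left₀ (norm_nonneg S) hSn n
  calc ‖iteratedFDeriv ℝ n G (t • ξ)‖ * ∏ _i : Fin n, ‖S‖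
      ≤ ‖iteratedFDeriv ℝ n G (t • ξ)‖ * |t| ^ n :=
        mul_le_mul_of_nonneg_left this (norm_nonneg _)
    _ = |t| ^ n * ‖iteratedFDeriv ℝ n G (t • ξ)‖ := by ring

lemma aux_dilate_contDiff {G : Ed d → ℂ} (hG : ∀ n : ℕ, ContDiff ℝ n G) (t : ℝ) (n : ℕ) :
    ContDiff ℝ n (fun ξ : Ed d => (starRingEnd ℂ) (G (t • ξ))) := by
  have h1 : ContDiff ℝ n (fun ξ : Ed d => G (t • ξ)) :=
    (hG n).comp (contDiff_const_smul t)
  exact (Complex.conjCLE.toContinuousLinearMap.contDiff.comp h1 : _)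


lemma aux_scalar {G : Ed d → ℂ} {L : ℕ} {K : ℝ} (hK : 0 < K)
    (hG : ∀ n : ℕ, ContDiff ℝ n G)
    (hvan : ∀ i, i < L → iteratedFDeriv ℝ i G 0 = 0)
    (Bs : ℕ → ℝ) (hBs : ∀ n η, ‖iteratedFDeriv ℝ n G η‖ ≤ Bs n)
    (i : ℕ) {t : ℝ} (ht : 0 < t) (ht1 : t ≤ 1) (ξ : Ed d) :
    t ^ i * ‖iteratedFDeriv ℝ i G (t • ξ)‖ ≤
      (Bs i + Bs L) * t ^ min (L : ℝ) K * (1 + ‖ξ‖) ^ min (L : ℝ) K := by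
  set m : ℝ := min (L : ℝ) K with hm
  have hm0 : 0 ≤ m := le_min (by positivity) hK.le
  have hmL : m ≤ (L : ℝ) := min_le_left _ _
  have hBs0 : ∀ n, 0 ≤ Bs n := fun n => (norm_nonneg _).trans (hBs n 0)
  have h1ξ : (1 : ℝ) ≤ 1 + ‖ξ‖ := by linarith [norm_nonneg ξ]
  have hpow1 : (1 : ℝ) ≤ (1 + ‖ξ‖) ^ m := by
    have := Real.rpow_le_rpow_of_exponent_le h1ξ hm0
    rwa [Real.rpow_zero] at this
  have htm : 0 < t ^ m := Real.rpow_pos_of_pos ht m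
  rcases le_or_gt m (i : ℝ) with hcase | hcase
  · -- m ≤ i : use t ^ i ≤ t ^ m
    have h1 : t ^ i * ‖iteratedFDeriv ℝ i G (t • ξ)‖ ≤ t ^ i * Bs i :=
      mul_le_mul_of_nonneg_left (hBs i _) (by positivity)
    have h2 : t ^ i ≤ t ^ m := by
      rw [← Real.rpow_natCast t i]
      exact Real.rpow_le_rpow_of_exponent_ge ht ht1 hcase
    calc t ^ i * ‖iteratedFDeriv ℝ i G (t • ξ)‖ ≤ t ^ i * Bs i := h1
      _ ≤ t ^ m * Bs i := mul_le_mul_of_nonneg_right h2 (hBs0 i)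
      _ = Bs i * t ^ m * 1 := by ring
      _ ≤ (Bs i + Bs L) * t ^ m * ((1 + ‖ξ‖) ^ m) := by
          apply mul_le_mul (by nlinarith [hBs0 L, htm]) hpow1 zero_le_one
          exact mul_nonneg (by linarith [hBs0 i, hBs0 L]) htm.le
  · -- i < m ≤ L
    have hiL : i < L := by exact_mod_cast hcase.trans_le hmL
    have hmi0 : 0 ≤ m - (i : ℝ) := by linarith
    set u : ℝ := t * ‖ξ‖ with hu
    have hu0 : 0 ≤ u := by positivity
    have hnorm : ‖t • ξ‖ = u := by
      rw [norm_smul, Real.norm_eq_abs, abs_of_pos ht]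
    have hkey : ‖iteratedFDeriv ℝ i G (t • ξ)‖ ≤ (Bs i + Bs L) * u ^ (m - (i : ℝ)) := by
      rcases le_or_gt u 1 with hu1 | hu1
      · -- small u: use the Taylor decay
        have hdecay : ‖iteratedFDeriv ℝ i G (t • ξ)‖ ≤ Bs L * ‖t • ξ‖ ^ (L - i) :=
          aux_taylor hG hvan (hBs L) (L - i) i (by omega) (t • ξ)
        rw [hnorm] at hdecay
        have hstep : u ^ (L - i) ≤ u ^ (m - (i : ℝ)) := by
          rcases eq_or_lt_of_le hu0 with h0 | h0
          · rcases eq_or_lt_of_le hmi0 with hmi | hmi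
            · rw [← h0, ← hmi, Real.rpow_zero]
              simp [zero_pow (by omega : L - i ≠ 0)]
            · rw [← h0, Real.zero_rpow (by linarith)]
              simp [zero_pow (by omega : L - i ≠ 0)]
          · rw [← Real.rpow_natCast u (L - i)]
            apply Real.rpow_le_rpow_of_exponent_ge h0 hu1
            rw [Nat.cast_sub hiL.le]
            linarith
        calc ‖iteratedFDeriv ℝ i G (t • ξ)‖ ≤ Bs L * u ^ (L - i) := hdecay
          _ ≤ Bs L * u ^ (m - (i : ℝ)) := mul_le_mul_of_nonneg_left hstep (hBs0 L)
          _ ≤ (Bs i + Bs L) * u ^ (m - (i : ℝ)) := by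
              apply mul_le_mul_of_nonneg_right _ (Real.rpow_nonneg hu0 _)
              linarith [hBs0 i]
      · have hone : (1 : ℝ) ≤ u ^ (m - (i : ℝ)) := by
          have := Real.rpow_le_rpow_of_exponent_le hu1.le hmi0
          rwa [Real.rpow_zero] at this
        calc ‖iteratedFDeriv ℝ i G (t • ξ)‖ ≤ Bs i := hBs i _
          _ = Bs i * 1 := by ring
          _ ≤ (Bs i + Bs L) * u ^ (m - (i : ℝ)) := by
              apply mul_le_mul _ hone zero_le_one (by linarith [hBs0 i, hBs0 L])
              linarith [hBs0 L]
    have hsplit : t ^ i * u ^ (m - (i : ℝ)) = t ^ m * ‖ξ‖ ^ (m - (i 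
: ℝ)) := by
      rw [hu, Real.mul_rpow ht.le (norm_nonneg ξ), ← Real.rpow_natCast t i, ← mul_assoc,
        ← Real.rpow_add ht]
      congr 1
      ring
    have hxi : ‖ξ‖ ^ (m - (i : ℝ)) ≤ (1 + ‖ξ‖) ^ m := by
      calc ‖ξ‖ ^ (m - (i : ℝ)) ≤ (1 + ‖ξ‖) ^ (m - (i : ℝ)) :=
            Real.rpow_le_rpow (norm_nonneg ξ) (by linarith) hmi0
        _ ≤ (1 + ‖ξ‖) ^ m := Real.rpow_le_rpow_of_exponent_le h1ξ (by linarith [Nat.cast_nonneg (α := ℝ) i])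
    calc t ^ i * ‖iteratedFDeriv ℝ i G (t • ξ)‖
        ≤ t ^ i * ((Bs i + Bs L) * u ^ (m - (i : ℝ))) :=
          mul_le_mul_of_nonneg_left hkey (by positivity)
      _ = (Bs i + Bs L) * (t ^ i * u ^ (m - (i : ℝ))) := by ring
      _ = (Bs i + Bs L) * (t ^ m * ‖ξ‖ ^ (m - (i : ℝ))) := by rw [hsplit]
      _ ≤ (Bs i + Bs L) * (t ^ m * (1 + ‖ξ‖) ^ m) := by
          apply mul_le_mul_of_nonneg_left _ (by linarith [hBs0 i, hBs0 L])
          exact mul_le_mul_of_nonneg_left hxi htm.le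
      _ = (Bs i + Bs L) * t ^ m * (1 + ‖ξ‖) ^ m := by ring


lemma aux_prod_bound {G F : Ed d → ℂ} {L : ℕ} {K : ℝ} (hK : 0 < K)
    (hG : ∀ n : ℕ, ContDiff ℝ n G) (hF : ∀ n : ℕ, ContDiff ℝ n F)
    (hvan : ∀ i, i < L → iteratedFDeriv ℝ i G 0 = 0)
    (Bs : ℕ → ℝ) (hBs : ∀ n η, ‖iteratedFDeriv ℝ n G η‖ ≤ Bs n)
    (hFS : ∀ n : ℕ, Integrable (fun ξ : Ed d => (1 + ‖ξ‖) ^ K * ‖iteratedFDeriv ℝ n F ξ‖))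
    (n : ℕ) :
    ∃ A : ℝ, 0 ≤ A ∧ ∀ t : ℝ, 0 < t → t ≤ 1 →
      Integrable (fun ξ : Ed d =>
        ‖iteratedFDeriv ℝ n (fun ξ : Ed d => (starRingEnd ℂ) (G (t • ξ)) * F ξ) ξ‖) ∧
      ∫ ξ : Ed d, ‖iteratedFDeriv ℝ n (fun ξ : Ed d => (starRingEnd ℂ) (G (t • ξ)) * F ξ) ξ‖ ≤
        A * t ^ min (L : ℝ) K := by
  set m : ℝ := min (L : ℝ) K with hm
  have hmK : m ≤ K := min_le_right _ _
  set g : Ed d → ℝ := fun ξ => ∑ i ∈ Finset.range (n + 1),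
    (n.choose i : ℝ) * (Bs i + Bs L) * ((1 + ‖ξ‖) ^ K * ‖iteratedFDeriv ℝ (n - i) F ξ‖)
    with hg
  have hBs0 : ∀ j, 0 ≤ Bs j := fun j => (norm_nonneg _).trans (hBs j 0)
  have hgint : Integrable g := by
    apply integrable_finset_sum
    intro i _
    exact (hFS (n - i)).const_mul _
  have hg0 : ∀ ξ, 0 ≤ g ξ := by
    intro ξ
    apply Finset.sum_nonneg
    intro i _
    have h1 : (0:ℝ) ≤ (1 + ‖ξ‖) ^ K := Real.rpow_nonneg (by positivity) K
    have h2 := hBs0 i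
    have h3 := hBs0 L
    have h4 : (0:ℝ) ≤ (n.choose i : ℝ) := by positivity
    have h5 : (0:ℝ) ≤ ‖iteratedFDeriv ℝ (n - i) F ξ‖ := norm_nonneg _
    exact mul_nonneg (mul_nonneg h4 (by linarith)) (mul_nonneg h1 h5)
  refine ⟨∫ ξ, g ξ, integral_nonneg hg0, ?_⟩
  intro t ht ht1
  have htm : 0 < t ^ m := Real.rpow_pos_of_pos ht m
  have key : ∀ ξ : Ed d,
      ‖iteratedFDeriv ℝ n (fun ξ : Ed d => (starRingEnd ℂ) (G (t • ξ)) * F ξ) ξ‖ ≤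
        t ^ m * g ξ := by
    intro ξ
    have h1ξ : (1 : ℝ) ≤ 1 + ‖ξ‖ := by linarith [norm_nonneg ξ]
    have hmono : (1 + ‖ξ‖) ^ m ≤ (1 + ‖ξ‖) ^ K :=
      Real.rpow_le_rpow_of_exponent_le h1ξ hmK
    refine (norm_iteratedFDeriv_mul_le (𝕜 := ℝ) (N := (n : WithTop ℕ∞))
      (aux_dilate_contDiff hG t n) (hF n) ξ le_rfl).trans ?_
    rw [hg, Finset.mul_sum]
    apply Finset.sum_le_sum
    intro i hi
    have hterm : ‖iteratedFDeriv ℝ i (fun ξ : Ed d => (starRingEnd ℂ) (G (t • ξ))) ξ‖ ≤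
        (Bs i + Bs L) * t ^ m * (1 + ‖ξ‖) ^ K := by
      refine ((aux_dilate hG t i ξ).trans ?_)
      rw [abs_of_pos ht]
      refine (aux_scalar hK hG hvan Bs hBs i ht ht1 ξ).trans ?_
      exact mul_le_mul_of_nonneg_left hmono
        (mul_nonneg (by linarith [hBs0 i, hBs0 L]) htm.le)
    calc (n.choose i : ℝ) * ‖iteratedFDeriv ℝ i (fun ξ : Ed d => (starRingEnd ℂ) (G (t • ξ))) ξ‖ *
          ‖iteratedFDeriv ℝ (n - i) F ξ‖
        ≤ (n.choose i : ℝ) * ((Bs i + Bs L) * t ^ m * (1 + ‖ξ‖) ^ K) *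
          ‖iteratedFDeriv ℝ (n - i) F ξ‖ := by
          apply mul_le_mul_of_nonneg_right _ (norm_nonneg _)
          exact mul_le_mul_of_nonneg_left hterm (by positivity)
      _ = t ^ m * ((n.choose i : ℝ) * (Bs i + Bs L) *
          ((1 + ‖ξ‖) ^ K * ‖iteratedFDeriv ℝ (n - i) F ξ‖)) := by ring
  have hcont : Continuous (fun ξ : Ed d =>
      iteratedFDeriv ℝ n (fun ξ : Ed d => (starRingEnd ℂ) (G (t • ξ)) * F ξ) ξ) := by
    exact ((aux_dilate_contDiff hG t n).mul (hF n)).continuous_iteratedFDeriv le_rfl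
  have hint : Integrable (fun ξ : Ed d =>
      ‖iteratedFDeriv ℝ n (fun ξ : Ed d => (starRingEnd ℂ) (G (t • ξ)) * F ξ) ξ‖) := by
    refine ((hgint.const_mul (t ^ m)).mono' hcont.norm.aestronglyMeasurable ?_)
    filter_upwards with ξ
    rw [norm_norm]
    exact key ξ
  refine ⟨hint, ?_⟩
  calc ∫ ξ : Ed d, ‖iteratedFDeriv ℝ n (fun ξ : Ed d => (starRingEnd ℂ) (G (t • ξ)) * F ξ) ξ‖
      ≤ ∫ ξ : Ed d, t ^ m * g ξ := by
        apply integral_mono_of_nonneg (ae_of_all _ fun ξ => norm_nonneg _)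
          (hgint.const_mul _) (ae_of_all _ key)
    _ = (∫ ξ, g ξ) * t ^ m := by rw [integral_const_mul]; ring


lemma aux_onepow {a : ℝ} (ha : 0 ≤ a) (N : ℕ) : (1 + a) ^ N ≤ 2 ^ N * (1 + a ^ N) := by
  rcases le_total a 1 with h | h
  · calc (1 + a) ^ N ≤ 2 ^ N := pow_le_pow_left₀ (by linarith) (by linarith) N
      _ = 2 ^ N * 1 := by ring
      _ ≤ 2 ^ N * (1 + a ^ N) := by
        apply mul_le_mul_of_nonneg_left _ (by positivity)
        nlinarith [pow_nonneg ha N]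
  · calc (1 + a) ^ N ≤ (2 * a) ^ N := pow_le_pow_left₀ (by linarith) (by linarith) N
      _ = 2 ^ N * a ^ N := mul_pow 2 a N
      _ ≤ 2 ^ N * (1 + a ^ N) := by
        apply mul_le_mul_of_nonneg_left _ (by positivity)
        linarith

lemma aux_decayFT {h : Ed d → ℂ} {N : ℕ} (hsm : ContDiff ℝ (N : ℕ∞) h)
    (hint : ∀ n : ℕ, n ≤ N → Integrable (fun v : Ed d => ‖iteratedFDeriv ℝ n h v‖))
    (z : Ed d) :
    (1 + ‖z‖) ^ N * ‖𝓕 h z‖ ≤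
      2 ^ N * (1 + 2 ^ N) * ∑ j ∈ Finset.range (N + 1), ∫ v : Ed d, ‖iteratedFDeriv ℝ j h v‖ := by
  set S : ℝ := ∑ j ∈ Finset.range (N + 1), ∫ v : Ed d, ‖iteratedFDeriv ℝ j h v‖ with hS
  have hnn : ∀ j ∈ Finset.range (N + 1), 0 ≤ ∫ v : Ed d, ‖iteratedFDeriv ℝ j h v‖ :=
    fun j _ => integral_nonneg fun v => norm_nonneg _
  have hS0 : 0 ≤ S := Finset.sum_nonneg hnn
  have h'f : ∀ k n : ℕ, (k : ℕ∞) ≤ 0 → (n : ℕ∞) ≤ N →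
      Integrable (fun v : Ed d => ‖v‖ ^ k * ‖iteratedFDeriv ℝ n h v‖) := by
    intro k n hk hn
    have hk0 : k = 0 := by exact_mod_cast le_antisymm hk zero_le
    have hn' : n ≤ N := by exact_mod_cast hn
    subst hk0
    simpa [pow_zero, one_mul] using hint n hn'
  have b0 : ‖𝓕 h z‖ ≤ S := by
    refine (VectorFourier.norm_fourierIntegral_le_integral_norm _ _ _ _ _).trans ?_
    have e0 : (∫ v : Ed d, ‖h v‖) = ∫ v : Ed d, ‖iteratedFDeriv ℝ 0 h v‖ := by
      simp [norm_iteratedFDeriv_zero]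
    rw [e0]
    exact Finset.single_le_sum hnn (by simp)
  have b1 : ‖z‖ ^ N * ‖𝓕 h z‖ ≤ 2 ^ N * S := by
    have := Real.pow_mul_norm_iteratedFDeriv_fourier_le (K := 0) (N := N) hsm h'f
      (k := 0) (n := N) le_rfl le_rfl z
    simp only [norm_iteratedFDeriv_zero, pow_zero, one_mul, Nat.cast_zero, mul_zero,
      zero_add] at this
    refine this.trans ?_
    rw [Finset.sum_product, Finset.sum_range_one]
    have : (∑ j ∈ Finset.range (N + 1), ∫ v : Ed d, ‖v‖ ^ 0 * ‖iteratedFDeriv ℝ j h v‖) = S := by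
      apply Finset.sum_congr rfl
      intro j _
      congr 1
      funext v
      rw [pow_zero, one_mul]
    rw [this]
  have hcomb : (1 + ‖z‖) ^ N ≤ 2 ^ N * (1 + ‖z‖ ^ N) := aux_onepow (norm_nonneg z) N
  calc (1 + ‖z‖) ^ N * ‖𝓕 h z‖ ≤ (2 ^ N * (1 + ‖z‖ ^ N)) * ‖𝓕 h z‖ :=
        mul_le_mul_of_nonneg_right hcomb (norm_nonneg _)
    _ = 2 ^ N * (‖𝓕 h z‖ + ‖z‖ ^ N * ‖𝓕 h z‖) := by ring
    _ ≤ 2 ^ N * (S + 2 ^ N * S) := by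
        apply mul_le_mul_of_nonneg_left _ (by positivity)
        exact add_le_add b0 b1
    _ = 2 ^ N * (1 + 2 ^ N) * S := by ring


lemma aux_cont_FT {f : Ed d → ℂ} (hf : Integrable f) : Continuous (𝓕 f) :=
  VectorFourier.fourierIntegral_continuous Real.continuous_fourierChar
    (by exact continuous_inner) hf

lemma aux_mult {f g : Ed d → ℂ} (hf : Integrable f) (hg : Integrable g) :
    ∫ ξ : Ed d, 𝓕 f ξ * g ξ = ∫ x : Ed d, f x * 𝓕 g x := by
  have hflip : (innerₗ (Ed d)).flip = innerₗ (Ed d) := by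
    apply LinearMap.ext; intro v; apply LinearMap.ext; intro w
    simpa using real_inner_comm w v
  have h := VectorFourier.integral_fourierIntegral_smul_eq_flip (e := Real.fourierChar)
    (L := innerₗ (Ed d)) Real.continuous_fourierChar (by exact continuous_inner) hf hg
  rw [hflip] at h
  simp only [smul_eq_mul] at h
  exact h

lemma aux_rpow_inv {x : ℝ} (hx : 0 < x) (k : ℕ) : x ^ (-(k : ℝ)) = (x ^ k)⁻¹ := by
  rw [Real.rpow_neg hx.le, Real.rpow_natCast]

lemma aux_ae_inv {f : Ed d → ℂ} (hf : Integrable f) (h'f : Integrable (𝓕 f)) :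
    f =ᵐ[(volume : Measure (Ed d))] 𝓕⁻ (𝓕 f) := by
  have hFcont : Continuous (𝓕⁻ (𝓕 f)) := by
    rw [Real.fourierInv_eq_fourier_comp_neg]
    exact aux_cont_FT (h'f.comp_neg)
  apply ae_eq_of_integral_contDiff_smul_eq hf.locallyIntegrable hFcont.locallyIntegrable
  intro φ hφ hφc
  set ψ : Ed d → ℂ := fun v => (φ v : ℂ) with hψ
  have hψcont : Continuous ψ := Complex.continuous_ofReal.comp hφ.continuous
  have hψsupp : HasCompactSupport ψ := hφc.comp_left (g := fun r : ℝ => (r : ℂ)) rfl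
  have hψint : Integrable ψ := hψcont.integrable_of_hasCompactSupport hψsupp
  have hψcd : ∀ n : ℕ, ContDiff ℝ n ψ := fun n =>
    Complex.ofRealCLM.contDiff.comp (hφ.of_le (by exact_mod_cast le_top))
  have hder_int : ∀ n : ℕ, Integrable (fun v : Ed d => ‖iteratedFDeriv ℝ n ψ v‖) := by
    intro n
    exact (((hψcd n).continuous_iteratedFDeriv le_rfl).norm).integrable_of_hasCompactSupport
      (hψsupp.iteratedFDeriv n).norm
  -- integrability of 𝓕 ψ
  have hFψ_cont : Continuous (𝓕 ψ) := aux_cont_FT hψint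
  set Cψ : ℝ := 2 ^ (d + 1) * (1 + 2 ^ (d + 1)) *
    ∑ j ∈ Finset.range (d + 1 + 1), ∫ v : Ed d, ‖iteratedFDeriv ℝ j ψ v‖ with hCψ
  have hdecay : ∀ z : Ed d, (1 + ‖z‖) ^ (d + 1) * ‖𝓕 ψ z‖ ≤ Cψ :=
    fun z => aux_decayFT (hψcd (d + 1)) (fun n _ => hder_int n) z
  have hFψ_int : Integrable (𝓕 ψ) := by
    have hmaj : Integrable (fun w : Ed d => Cψ * (1 + ‖w‖) ^ (-((d : ℝ) + 1))) volume := by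
      refine (integrable_one_add_norm ?_).const_mul Cψ
      rw [finrank_euclideanSpace_fin]; linarith
    refine hmaj.mono' hFψ_cont.aestronglyMeasurable ?_
    filter_upwards with w
    have h1 : (0 : ℝ) < 1 + ‖w‖ := by positivity
    have h2 : (0 : ℝ) < (1 + ‖w‖) ^ (d + 1) := by positivity
    have h3 : ((d : ℝ) + 1) = ((d + 1 : ℕ) : ℝ) := by push_cast; ring
    rw [h3, aux_rpow_inv h1, ← div_eq_mul_inv, le_div_iff₀ h2, mul_comm]
    exact hdecay w
  -- now the two test integrals
  have hχint : Integrable (𝓕⁻ ψ) := by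
    have : (𝓕⁻ ψ) = fun w => 𝓕 ψ (-w) := by
      funext w; exact Real.fourierInv_eq_fourier_neg ψ w
    rw [this]
    exact hFψ_int.comp_neg
  have hinv : 𝓕 (𝓕⁻ ψ) = ψ := hψcont.fourier_fourierInv_eq hψint hFψ_int
  have key1 : ∫ x : Ed d, ψ x * f x = ∫ ξ : Ed d, (𝓕⁻ ψ) ξ * 𝓕 f ξ := by
    conv_lhs => rw [← hinv]
    exact aux_mult hχint hf
  have key2 : ∫ x : Ed d, ψ x * (𝓕⁻ (𝓕 f)) x = ∫ ξ : Ed d, (𝓕⁻ ψ) ξ * 𝓕 f ξ := by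
    have e1 : ∫ x : Ed d, ψ x * (𝓕⁻ (𝓕 f)) x = ∫ x : Ed d, ψ (-x) * 𝓕 (𝓕 f) x := by
      rw [← integral_neg_eq_self (fun x : Ed d => ψ (-x) * 𝓕 (𝓕 f) x) volume]
      congr 1
      funext x
      rw [neg_neg, Real.fourierInv_eq_fourier_neg]
    have e2 : ∫ ξ : Ed d, 𝓕 (fun x : Ed d => ψ (-x)) ξ * 𝓕 f ξ
        = ∫ x : Ed d, ψ (-x) * 𝓕 (𝓕 f) x := aux_mult hψint.comp_neg h'f
    have e3 : 𝓕 (fun x : Ed d => ψ (-x)) = 𝓕⁻ ψ :=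
      (Real.fourierInv_eq_fourier_comp_neg ψ).symm
    rw [e1, ← e2, e3]
  have : ∀ x : Ed d, φ x • f x = ψ x * f x := fun x => Complex.real_smul
  simp_rw [Complex.real_smul]
  rw [key1, key2]

lemma aux_smul_change {f : Ed d → ℂ} {t : ℝ} (ht : 0 < t) :
    ∫ z : Ed d, f z = (t ^ d : ℝ) • ∫ v : Ed d, f (t • v) := by
  rw [Measure.integral_comp_smul volume f t, finrank_euclideanSpace_fin]
  have h1 : |(t ^ d)⁻¹| = (t ^ d)⁻¹ := abs_of_pos (by positivity)
  rw [h1, smul_smul, mul_inv_cancel₀ (by positivity), one_smul]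

lemma aux_conj_char (θ : ℝ) (z : ℂ) :
    (starRingEnd ℂ) (𝐞 (-θ) • z) = 𝐞 θ • (starRingEnd ℂ) z := by
  rw [Circle.smul_def, Circle.smul_def, smul_eq_mul, smul_eq_mul, map_mul]
  congr 1
  rw [Real.fourierChar_apply, Real.fourierChar_apply, ← Complex.exp_conj]
  congr 1
  simp only [map_mul, Complex.conj_ofReal, Complex.conj_I]
  push_cast
  ring

lemma aux_conj_FT {Φ : Ed d → ℂ} (η : Ed d) :
    (starRingEnd ℂ) (𝓕 Φ η) = ∫ v : Ed d, 𝐞 ⟪v, η⟫ • (starRingEnd ℂ) (Φ v) := by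
  rw [Real.fourier_eq, ← integral_conj]
  congr 1
  funext v
  exact aux_conj_char ⟪v, η⟫ (Φ v)

lemma aux_CWT_eq {Φ Φ₀ : Ed d → ℂ} (hΦint : Integrable Φ) (hΦ₀int : Integrable Φ₀)
    (hFint : Integrable (𝓕 Φ₀)) {t : ℝ} (ht : 0 < t) (x : Ed d) :
    CWT Φ Φ₀ x t = ((t ^ ((d : ℝ) / 2) : ℝ) : ℂ) *
      𝓕 (fun ξ : Ed d => (starRingEnd ℂ) (𝓕 Φ (t • ξ)) * 𝓕 Φ₀ ξ) (-x) := by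
  set u : Ed d → ℂ := fun y => (starRingEnd ℂ) (Φ (t⁻¹ • (y - x))) with hu
  have hu_int : Integrable u := by
    have h1 : Integrable (fun y : Ed d => Φ (t⁻¹ • y)) :=
      (integrable_comp_smul_iff volume Φ (inv_ne_zero ht.ne')).mpr hΦint
    have h2 : Integrable (fun y : Ed d => Φ (t⁻¹ • (y - x))) := h1.comp_sub_right x
    exact Complex.conjCLE.toContinuousLinearMap.integrable_comp h2
  have step1 : CWT Φ Φ₀ x t =
      ((t ^ (-(d : ℝ) / 2) : ℝ) : ℂ) * ∫ y : Ed d, u y * Φ₀ y := by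
    rw [CWT, ← integral_const_mul]
    have hfr : (Module.finrank ℝ (Ed d) : ℝ) = (d : ℝ) := by
      rw [finrank_euclideanSpace_fin]
    congr 1
    funext y
    rw [hfr, map_mul, Complex.conj_ofReal, hu]
    ring
  set F : Ed d → ℂ := 𝓕 Φ₀ with hF
  set w : Ed d → ℂ := fun ξ => F (-ξ) with hw
  have hw_int : Integrable w := hFint.comp_neg
  have h𝓕w : 𝓕 w = 𝓕⁻ F := (Real.fourierInv_eq_fourier_comp_neg F).symm
  have step2 : ∫ y : Ed d, u y * Φ₀ y = ∫ y : Ed d, u y * 𝓕 w y := by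
    apply integral_congr_ae
    filter_upwards [aux_ae_inv hΦ₀int hFint] with y hy
    rw [hy, h𝓕w]
  have step3 : ∫ y : Ed d, u y * 𝓕 w y = ∫ ξ : Ed d, 𝓕 u ξ * w ξ :=
    (aux_mult hu_int hw_int).symm
  have step4 : ∫ ξ : Ed d, 𝓕 u ξ * w ξ = ∫ ξ : Ed d, 𝓕 u (-ξ) * F ξ := by
    rw [← integral_neg_eq_self (fun ξ : Ed d => 𝓕 u (-ξ) * F ξ) volume]
    congr 1
    funext ξ
    rw [neg_neg]
  have step5 : ∀ ξ : Ed d, 𝓕 u (-ξ) =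
      ((t ^ d : ℝ) : ℂ) * ((𝐞 ⟪x, ξ⟫ : Circle) : ℂ) * (starRingEnd ℂ) (𝓕 Φ (t • ξ)) := by
    intro ξ
    have e0 : 𝓕 u (-ξ) = ∫ y : Ed d, ((𝐞 ⟪y, ξ⟫ : Circle) : ℂ) * u y := by
      rw [Real.fourier_eq]
      congr 1
      funext y
      rw [inner_neg_right, neg_neg, Circle.smul_def, smul_eq_mul]
    have e1 : (∫ y : Ed d, ((𝐞 ⟪y, ξ⟫ : Circle) : ℂ) * u y)
        = ∫ z : Ed d, ((𝐞 ⟪x + z, ξ⟫ : Circle) : ℂ) * u (x + z) :=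
      (integral_add_left_eq_self (fun y : Ed d => ((𝐞 ⟪y, ξ⟫ : Circle) : ℂ) * u y) x).symm
    have e2 : (∫ z : Ed d, ((𝐞 ⟪x + z, ξ⟫ : Circle) : ℂ) * u (x + z)) =
        (t ^ d : ℝ) • ∫ v : Ed d, ((𝐞 ⟪x + t • v, ξ⟫ : Circle) : ℂ) * u (x + t • v) :=
      aux_smul_change ht
    have e3 : ∀ v : Ed d, u (x + t • v) = (starRingEnd ℂ) (Φ v) := by
      intro v
      have hv : t⁻¹ • (x + t • v - x) = v := by
        rw [add_sub_cancel_left, inv_smul_smul₀ ht.ne']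
      show (starRingEnd ℂ) (Φ (t⁻¹ • (x + t • v - x))) = (starRingEnd ℂ) (Φ v)
      rw [hv]
    have e4 : ∀ v : Ed d, ⟪x + t • v, ξ⟫ = ⟪x, ξ⟫ + ⟪v, t • ξ⟫ := by
      intro v
      rw [inner_add_left, real_inner_smul_left, real_inner_smul_right]
    have e5 : (∫ v : Ed d, ((𝐞 ⟪x + t • v, ξ⟫ : Circle) : ℂ) * u (x + t • v))
        = ((𝐞 ⟪x, ξ⟫ : Circle) : ℂ) *
          ∫ v : Ed d, ((𝐞 ⟪v, t • ξ⟫ : Circle) : ℂ) * (starRingEnd ℂ) (Φ v) := by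
      rw [← integral_const_mul]
      congr 1
      funext v
      rw [e3 v, e4 v, AddChar.map_add_eq_mul, Circle.coe_mul]
      ring
    have e6 : (∫ v : Ed d, ((𝐞 ⟪v, t • ξ⟫ : Circle) : ℂ) * (starRingEnd ℂ) (Φ v))
        = (starRingEnd ℂ) (𝓕 Φ (t • ξ)) := by
      rw [aux_conj_FT (t • ξ)]
      congr 1
    rw [e0, e1, e2, e5, e6, Complex.real_smul]
    ring
  have step6 : ∫ ξ : Ed d, 𝓕 u (-ξ) * F ξ = ((t ^ d : ℝ) : ℂ) *
      𝓕 (fun ξ : Ed d => (starRingEnd ℂ) (𝓕 Φ (t • ξ)) * 𝓕 Φ₀ ξ) (-x) := by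
    rw [Real.fourier_eq, ← integral_const_mul]
    congr 1
    funext ξ
    rw [step5 ξ, inner_neg_right, neg_neg, Circle.smul_def, smul_eq_mul, real_inner_comm]
    ring
  rw [step1, step2, step3, step4, step6]
  have hc : ((t ^ (-(d : ℝ) / 2) : ℝ) : ℂ) * ((t ^ d : ℝ) : ℂ) =
      ((t ^ ((d : ℝ) / 2) : ℝ) : ℂ) := by
    rw [← Complex.ofReal_mul]
    congr 1
    rw [← Real.rpow_natCast t d, ← Real.rpow_add ht]
    congr 1
    ring
  rw [← mul_assoc, hc]

end Aux12
end
end Aux12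

/-- Decay of the continuous wavelet transform for small scales (Lemma A.3 (i)):
if `Φ` satisfies `(D)`, `(M_{L-1})` and `Φ₀` satisfies `(D)`, `(S_K)`, then
`|(W_Φ Φ₀)(x,t)| ≤ C_N t^{min{L,K}+d/2} (1+|x|)^{-N}` for `0 < t < 1`. -/
theorem statement12 (d : ℕ) (hd : 1 ≤ d) (L : ℕ) (K : ℝ) (hK : 0 < K)
    (Φ Φ₀ : Ed d → ℂ)
    (hΦ2 : MemLp Φ 2 (volume : Measure (Ed d)))
    (hΦ₀2 : MemLp Φ₀ 2 (volume : Measure (Ed d)))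
    (hΦD : CondD Φ) (hΦM : CondM Φ L)
    (hΦ₀D : CondD Φ₀) (hΦ₀S : CondS Φ₀ K) :
    ∀ N : ℕ, ∃ C : ℝ,
      ∀ (x : Ed d) (t : ℝ), 0 < t → t < 1 →
        ‖CWT Φ Φ₀ x t‖ ≤
          C * t ^ (min (L : ℝ) K + (d : ℝ) / 2) * (1 + ‖x‖) ^ (-(N : ℝ)) := by
  classical
  intro N
  set m : ℝ := min (L : ℝ) K with hm
  -- basic integrability
  have hΦm : AEStronglyMeasurable Φ (volume : Measure (Ed d)) := hΦ2.aestronglyMeasurable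
  have hΦ₀m : AEStronglyMeasurable Φ₀ (volume : Measure (Ed d)) := hΦ₀2.aestronglyMeasurable
  have hintΦ : ∀ n : ℕ, Integrable (fun v : Ed d => ‖v‖ ^ n * ‖Φ v‖) :=
    Aux12.aux_int hΦm hΦD
  have hintΦ₀ : ∀ n : ℕ, Integrable (fun v : Ed d => ‖v‖ ^ n * ‖Φ₀ v‖) :=
    Aux12.aux_int hΦ₀m hΦ₀D
  have hΦint : Integrable Φ := by
    have h0 : Integrable (fun v : Ed d => ‖Φ v‖) := by simpa using hintΦ 0
    exact (integrable_norm_iff hΦm).mp h0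
  have hΦ₀int : Integrable Φ₀ := by
    have h0 : Integrable (fun v : Ed d => ‖Φ₀ v‖) := by simpa using hintΦ₀ 0
    exact (integrable_norm_iff hΦ₀m).mp h0
  -- the two Fourier transforms
  set G : Ed d → ℂ := 𝓕 Φ with hG
  set F : Ed d → ℂ := 𝓕 Φ₀ with hF
  have hGsm : ∀ n : ℕ, ContDiff ℝ n G := fun n => Aux12.aux_smooth hintΦ n
  have hFsm : ∀ n : ℕ, ContDiff ℝ n F := fun n => Aux12.aux_smooth hintΦ₀ n
  set Bs : ℕ → ℝ := fun n => (2 * π) ^ n * ∫ v : Ed d, ‖v‖ ^ n * ‖Φ v‖ with hBs_def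
  have hBs : ∀ n η, ‖iteratedFDeriv ℝ n G η‖ ≤ Bs n := fun n η =>
    Aux12.aux_deriv_bound hΦm hintΦ n η
  have hvan : ∀ i, i < L → iteratedFDeriv ℝ i G 0 = 0 := hΦM
  have hFS : ∀ n : ℕ, Integrable (fun ξ : Ed d => (1 + ‖ξ‖) ^ K * ‖iteratedFDeriv ℝ n F ξ‖) :=
    hΦ₀S
  have hFint : Integrable F := by
    refine (hFS 0).mono' (Aux12.aux_cont_FT hΦ₀int).aestronglyMeasurable ?_
    filter_upwards with ξ
    have h1ξ : (1 : ℝ) ≤ 1 + ‖ξ‖ := by linarith [norm_nonneg ξ]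
    have hone : (1 : ℝ) ≤ (1 + ‖ξ‖) ^ K := by
      have := Real.rpow_le_rpow_of_exponent_le h1ξ hK.le
      rwa [Real.rpow_zero] at this
    calc ‖F ξ‖ = 1 * ‖iteratedFDeriv ℝ 0 F ξ‖ := by
          rw [norm_iteratedFDeriv_zero, one_mul]
      _ ≤ (1 + ‖ξ‖) ^ K * ‖iteratedFDeriv ℝ 0 F ξ‖ :=
          mul_le_mul_of_nonneg_right hone (norm_nonneg _)
  -- per-order bounds on the derivatives of the product
  choose A hA0 hAprop using fun j : ℕ =>
    Aux12.aux_prod_bound (G := G) (F := F) hK hGsm hFsm hvan Bs hBs hFS j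
  set C : ℝ := 2 ^ N * (1 + 2 ^ N) * ∑ j ∈ Finset.range (N + 1), A j with hC
  refine ⟨C, ?_⟩
  intro x t ht ht1
  have ht1' : t ≤ 1 := ht1.le
  set mt : Ed d → ℂ := fun ξ => (starRingEnd ℂ) (G (t • ξ)) * F ξ with hmt
  have hsm_mt : ContDiff ℝ (N : ℕ∞) mt := by
    have := (Aux12.aux_dilate_contDiff hGsm t N).mul (hFsm N)
    exact_mod_cast this
  have hint_mt : ∀ n : ℕ, n ≤ N → Integrable (fun v : Ed d => ‖iteratedFDeriv ℝ n mt v‖) :=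
    fun n _ => (hAprop n t ht ht1').1
  have hdecay := Aux12.aux_decayFT (N := N) hsm_mt hint_mt (-x)
  have hsum : (∑ j ∈ Finset.range (N + 1), ∫ v : Ed d, ‖iteratedFDeriv ℝ j mt v‖) ≤
      (∑ j ∈ Finset.range (N + 1), A j) * t ^ m := by
    rw [Finset.sum_mul]
    exact Finset.sum_le_sum fun j _ => (hAprop j t ht ht1').2
  have hdecay2 : (1 + ‖x‖) ^ N * ‖𝓕 mt (-x)‖ ≤ C * t ^ m := by
    rw [norm_neg] at hdecay
    refine hdecay.trans ?_
    calc 2 ^ N * (1 + 2 ^ N) * ∑ j ∈ Finset.range (N + 1), ∫ v : Ed d, ‖iteratedFDeriv ℝ j mt v‖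
        ≤ 2 ^ N * (1 + 2 ^ N) * ((∑ j ∈ Finset.range (N + 1), A j) * t ^ m) :=
          mul_le_mul_of_nonneg_left hsum (by positivity)
      _ = C * t ^ m := by rw [hC]; ring
  -- the identity
  have hid := Aux12.aux_CWT_eq (Φ := Φ) (Φ₀ := Φ₀) hΦint hΦ₀int hFint ht x
  have hpos : (0 : ℝ) < (1 + ‖x‖) ^ N := by positivity
  have hnorm : ‖CWT Φ Φ₀ x t‖ = t ^ ((d : ℝ) / 2) * ‖𝓕 mt (-x)‖ := by
    rw [hid, norm_mul, Complex.norm_real, Real.norm_eq_abs,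
      abs_of_pos (Real.rpow_pos_of_pos ht _)]
  have hbound : ‖𝓕 mt (-x)‖ ≤ C * t ^ m * ((1 + ‖x‖) ^ N)⁻¹ := by
    rw [← div_eq_mul_inv, le_div_iff₀ hpos]
    calc ‖𝓕 mt (-x)‖ * (1 + ‖x‖) ^ N = (1 + ‖x‖) ^ N * ‖𝓕 mt (-x)‖ := by ring
      _ ≤ C * t ^ m := hdecay2
  calc ‖CWT Φ Φ₀ x t‖ = t ^ ((d : ℝ) / 2) * ‖𝓕 mt (-x)‖ := hnorm
    _ ≤ t ^ ((d : ℝ) / 2) * (C * t ^ m * ((1 + ‖x‖) ^ N)⁻¹) :=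
        mul_le_mul_of_nonneg_left hbound (Real.rpow_pos_of_pos ht _).le
    _ = C * t ^ (m + (d : ℝ) / 2) * (1 + ‖x‖) ^ (-(N : ℝ)) := by
        rw [Real.rpow_add ht, Aux12.aux_rpow_inv (by positivity : (0:ℝ) < 1 + ‖x‖) N]
        ring
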